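/- Let T_{n} denote the star with n leaves and T_{n} ⊙_k the graph obtained by attaching a path with k vertices to the center of the star. Then for every k ≥ 1 and n ≥ 3, the Node-Kayles Grundy value satisfies 𝒢(T_{n} ⊙_k) = 𝒢(T_{n−2} ⊙_k). -/

import Mathlib

/-- The minimum excluded value of a finite set of naturals. -/
noncomputable def mex (s : Finset ℕ) : ℕ := sInf {n : ℕ | n ∉ s}

/-- Node-Kayles Grundy value of the position given by the induced subgraph of `G`
on the finite vertex set `s`: a move picks a vertex `v ∈ s` and removes its closed
neighborhood, and the Grundy value is the mex of the Grundy values of the options.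
(For a disconnected position this agrees with the nim-sum of the components'
Grundy values, by the Sprague–Grundy theory.) -/
noncomputable def nkGrundy {V : Type*} [DecidableEq V] (G : SimpleGraph V) [DecidableRel G.Adj]
    (s : Finset V) : ℕ :=
  mex (s.attach.image fun v =>
    nkGrundy G ((s.erase v.1).filter fun w => ¬ G.Adj v.1 w))
termination_by s.card
decreasing_by
  exact lt_of_le_of_lt (Finset.card_filter_le _ _) (Finset.card_erase_lt_of_mem v.2)

instance {V : Type*} (r : V → V → Prop) [DecidableEq V] [DecidableRel r] :
    DecidableRel (SimpleGraph.fromRel r).Adj :=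
  fun a b => decidable_of_iff _ (SimpleGraph.fromRel_adj r a b).symm

/-- The star with `n` leaves together with a tail path of `k` extra vertices
attached to its center: center `0`, leaves `1, …, n`, path vertices
`n+1, …, n+k` (the center is joined to `n+1`).  Its vertex set is
`{0, …, n+k}`.  This is the graph `T_{n} ⊙_k`. -/
def starTail (n k : ℕ) : SimpleGraph ℕ :=
  SimpleGraph.fromRel (fun a b =>
    (a = 0 ∧ 1 ≤ b ∧ b ≤ n) ∨
    (a = 0 ∧ b = n + 1 ∧ 1 ≤ k) ∨
    (n + 1 ≤ a ∧ a < n + k ∧ b = a + 1))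

instance (n k : ℕ) : DecidableRel (starTail n k).Adj :=
  fun a b => decidable_of_iff _ (SimpleGraph.fromRel_adj _ a b).symm

lemma mex_not_mem (s : Finset ℕ) : mex s ∉ s := by
  have h : {n : ℕ | n ∉ s}.Nonempty := Infinite.exists_notMem_finset s
  exact Nat.sInf_mem h

lemma mex_eq_of {O X : Finset ℕ} (hsub : O ⊆ X) (hnot : mex O ∉ X) : mex X = mex O := by
  apply le_antisymm
  · exact Nat.sInf_le hnot
  · exact Nat.sInf_le (fun h => mex_not_mem X (hsub h))

def nkOpt {V : Type*} [DecidableEq V] (G : SimpleGraph V) [DecidableRel G.Adj] (v : V)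
    (s : Finset V) : Finset V :=
  (s.erase v).filter fun w => ¬ G.Adj v w

lemma nkGrundy_eq {V : Type*} [DecidableEq V] (G : SimpleGraph V) [DecidableRel G.Adj]
    (s : Finset V) :
    nkGrundy G s = mex (s.image fun v => nkGrundy G (nkOpt G v s)) := by
  rw [nkGrundy]
  congr 1
  ext y
  simp only [Finset.mem_image, Finset.mem_attach, true_and, Subtype.exists, nkOpt,
    exists_prop]

lemma nkOpt_ssubset {V : Type*} [DecidableEq V] (G : SimpleGraph V) [DecidableRel G.Adj]
    {v : V} {s : Finset V} (hv : v ∈ s) : nkOpt G v s ⊂ s :=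
  lt_of_le_of_lt (Finset.filter_subset _ _) (Finset.erase_ssubset hv)

variable {V : Type*} [DecidableEq V]

lemma isolated_pair (G : SimpleGraph V) [DecidableRel G.Adj] (u v : V)
    (huv : u ≠ v) (hadj : ¬ G.Adj u v) :
    ∀ s : Finset V, u ∉ s → v ∉ s → (∀ w ∈ s, ¬ G.Adj u w) → (∀ w ∈ s, ¬ G.Adj v w) →
      nkGrundy G (insert u (insert v s)) = nkGrundy G s := by
  intro s
  induction s using Finset.strongInduction with
  | _ s ih =>
    intro hu hv hiu hiv
    have huvs : u ∉ insert v s := by simp [huv, hu]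
    have hvus : v ∉ insert u s := by simp [huv.symm, hv]
    set S := insert u (insert v s) with hSdef
    -- option at u
    have optu : nkOpt G u S = insert v s := by
      unfold nkOpt
      rw [Finset.erase_insert huvs]
      apply Finset.filter_true_of_mem
      intro x hx
      rcases Finset.mem_insert.mp hx with rfl | hx
      · exact hadj
      · exact hiu x hx
    -- option at v
    have optv : nkOpt G v S = insert u s := by
      unfold nkOpt
      have hcomm : S = insert v (insert u s) := Finset.insert_comm u v s
      rw [hcomm, Finset.erase_insert hvus]
      apply Finset.filter_true_of_mem
      intro x hx
      rcases Finset.mem_insert.mp hx with rfl | hx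
      · exact fun h => hadj h.symm
      · exact hiv x hx
    -- option at x ∈ s
    have optx : ∀ x ∈ s, nkOpt G x S = insert u (insert v (nkOpt G x s)) := by
      intro x hx
      have hxu : x ≠ u := fun h => hu (h ▸ hx)
      have hxv : x ≠ v := fun h => hv (h ▸ hx)
      unfold nkOpt
      rw [Finset.erase_insert_of_ne hxu.symm, Finset.erase_insert_of_ne hxv.symm,
        Finset.filter_insert, if_pos (fun h : G.Adj x u => hiu x hx h.symm),
        Finset.filter_insert, if_pos (fun h : G.Adj x v => hiv x hx h.symm)]
    have key : ∀ x ∈ s, nkGrundy G (nkOpt G x S) = nkGrundy G (nkOpt G x s) := by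
      intro x hx
      rw [optx x hx]
      exact ih (nkOpt G x s) (nkOpt_ssubset G hx)
        (fun h => hu (Finset.mem_of_mem_filter _ h |> Finset.mem_of_mem_erase))
        (fun h => hv (Finset.mem_of_mem_filter _ h |> Finset.mem_of_mem_erase))
        (fun w hw => hiu w (Finset.mem_of_mem_erase (Finset.mem_of_mem_filter _ hw)))
        (fun w hw => hiv w (Finset.mem_of_mem_erase (Finset.mem_of_mem_filter _ hw)))
    -- the two extra option values differ from nkGrundy G s
    have hva : nkGrundy G s
        ∈ (insert v s).image (fun y => nkGrundy G (nkOpt G y (insert v s))) := by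
      refine Finset.mem_image.mpr ⟨v, Finset.mem_insert_self _ _, ?_⟩
      congr 1
      unfold nkOpt
      rw [Finset.erase_insert hv]
      exact Finset.filter_true_of_mem hiv
    have ha : nkGrundy G (insert v s) ≠ nkGrundy G s := by
      rw [nkGrundy_eq G (insert v s)]
      intro h
      exact mex_not_mem _ (h ▸ hva)
    have hub : nkGrundy G s
        ∈ (insert u s).image (fun y => nkGrundy G (nkOpt G y (insert u s))) := by
      refine Finset.mem_image.mpr ⟨u, Finset.mem_insert_self _ _, ?_⟩
      congr 1
      unfold nkOpt
      rw [Finset.erase_insert hu]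
      exact Finset.filter_true_of_mem hiu
    have hb : nkGrundy G (insert u s) ≠ nkGrundy G s := by
      rw [nkGrundy_eq G (insert u s)]
      intro h
      exact mex_not_mem _ (h ▸ hub)
    rw [nkGrundy_eq G S, nkGrundy_eq G s]
    have himg : S.image (fun y => nkGrundy G (nkOpt G y S))
        = insert (nkGrundy G (insert v s)) (insert (nkGrundy G (insert u s))
            (s.image (fun y => nkGrundy G (nkOpt G y s)))) := by
      rw [hSdef, Finset.image_insert, Finset.image_insert, optu, optv]
      congr 1
      congr 1
      exact Finset.image_congr (fun x hx => key x hx)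
    rw [himg]
    apply mex_eq_of
    · exact (Finset.subset_insert _ _).trans (Finset.subset_insert _ _) |>.trans
        (by rfl) |>.trans (le_of_eq rfl)
    · intro hmem
      rcases Finset.mem_insert.mp hmem with h | hmem
      · exact ha (by rw [← nkGrundy_eq] at h; exact h.symm ▸ rfl)
      · rcases Finset.mem_insert.mp hmem with h | hmem
        · exact hb (by rw [← nkGrundy_eq] at h; exact h.symm ▸ rfl)
        · exact mex_not_mem _ hmem

lemma pendant_pair (G : SimpleGraph V) [DecidableRel G.Adj] (c w u v : V)
    (hwc : w ≠ c) (huv : u ≠ v) (huvadj : ¬ G.Adj u v)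
    (hucadj : G.Adj u c) (hvcadj : G.Adj v c) (hwcadj : G.Adj w c) :
    ∀ s : Finset V, c ∈ s → w ∈ s → u ∉ s → v ∉ s →
      (∀ x ∈ s, G.Adj w x → x = c) →
      (∀ x ∈ s, G.Adj u x → x = c) →
      (∀ x ∈ s, G.Adj v x → x = c) →
      nkGrundy G (insert u (insert v s)) = nkGrundy G s := by
  intro s
  induction s using Finset.strongInduction with
  | _ s ih =>
    intro hc hw hu hv hwonly huonly hvonly
    have huc : u ≠ c := fun h => hu (h ▸ hc)
    have hvc : v ≠ c := fun h => hv (h ▸ hc)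
    have huw : u ≠ w := fun h => hu (h ▸ hw)
    have hvw : v ≠ w := fun h => hv (h ▸ hw)
    have huvs : u ∉ insert v s := by simp [huv, hu]
    have hvus : v ∉ insert u s := by simp [huv.symm, hv]
    have hvwadj : ¬ G.Adj v w := fun h => hwc (hvonly w hw h)
    have huwadj : ¬ G.Adj u w := fun h => hwc (huonly w hw h)
    set S := insert u (insert v s) with hSdef
    -- the position reached from playing w in s
    have optw : nkOpt G w s = (s.erase c).erase w := by
      unfold nkOpt
      ext y
      simp only [Finset.mem_filter, Finset.mem_erase]
      constructor
      · rintro ⟨⟨hyw, hys⟩, hadj⟩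
        exact ⟨hyw, fun h => hadj (h ▸ hwcadj), hys⟩
      · rintro ⟨hyw, hyc, hys⟩
        exact ⟨⟨hyw, hys⟩, fun h => hyc (hwonly y hys h)⟩
    -- option at u
    have optu : nkOpt G u S = insert v (s.erase c) := by
      unfold nkOpt
      rw [Finset.erase_insert huvs, Finset.filter_insert, if_pos huvadj]
      congr 1
      ext y
      simp only [Finset.mem_filter, Finset.mem_erase]
      constructor
      · rintro ⟨hys, hadj⟩
        exact ⟨fun h => hadj (h ▸ hucadj), hys⟩
      · rintro ⟨hyc, hys⟩
        exact ⟨hys, fun h => hyc (huonly y hys h)⟩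
    have optv : nkOpt G v S = insert u (s.erase c) := by
      unfold nkOpt
      have hcomm : S = insert v (insert u s) := Finset.insert_comm u v s
      rw [hcomm, Finset.erase_insert hvus, Finset.filter_insert,
        if_pos (fun h : G.Adj v u => huvadj h.symm)]
      congr 1
      ext y
      simp only [Finset.mem_filter, Finset.mem_erase]
      constructor
      · rintro ⟨hys, hadj⟩
        exact ⟨fun h => hadj (h ▸ hvcadj), hys⟩
      · rintro ⟨hyc, hys⟩
        exact ⟨hys, fun h => hyc (hvonly y hys h)⟩
    have hwec : w ∈ s.erase c := Finset.mem_erase.mpr ⟨hwc, hw⟩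
    -- value of option at u equals value of playing w in s
    have valu : nkGrundy G (insert v (s.erase c)) = nkGrundy G (nkOpt G w s) := by
      rw [optw]
      conv_lhs => rw [← Finset.insert_erase hwec]
      exact isolated_pair G v w hvw hvwadj ((s.erase c).erase w)
        (fun h => hv (Finset.mem_of_mem_erase (Finset.mem_of_mem_erase h)))
        (Finset.notMem_erase _ _)
        (fun x hx hadj => (Finset.mem_erase.mp (Finset.mem_of_mem_erase hx)).1
          (hvonly x (Finset.mem_of_mem_erase (Finset.mem_of_mem_erase hx)) hadj))
        (fun x hx hadj => (Finset.mem_erase.mp (Finset.mem_of_mem_erase hx)).1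
          (hwonly x (Finset.mem_of_mem_erase (Finset.mem_of_mem_erase hx)) hadj))
    have valv : nkGrundy G (insert u (s.erase c)) = nkGrundy G (nkOpt G w s) := by
      rw [optw]
      conv_lhs => rw [← Finset.insert_erase hwec]
      exact isolated_pair G u w huw huwadj ((s.erase c).erase w)
        (fun h => hu (Finset.mem_of_mem_erase (Finset.mem_of_mem_erase h)))
        (Finset.notMem_erase _ _)
        (fun x hx hadj => (Finset.mem_erase.mp (Finset.mem_of_mem_erase hx)).1
          (huonly x (Finset.mem_of_mem_erase (Finset.mem_of_mem_erase hx)) hadj))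
        (fun x hx hadj => (Finset.mem_erase.mp (Finset.mem_of_mem_erase hx)).1
          (hwonly x (Finset.mem_of_mem_erase (Finset.mem_of_mem_erase hx)) hadj))
    -- values of options at x ∈ s agree
    have key : ∀ x ∈ s, nkGrundy G (nkOpt G x S) = nkGrundy G (nkOpt G x s) := by
      intro x hx
      by_cases hxc : x = c
      · subst hxc
        congr 1
        unfold nkOpt
        rw [hSdef, Finset.erase_insert_of_ne huc, Finset.erase_insert_of_ne hvc,
          Finset.filter_insert, if_neg (fun h : ¬ G.Adj x u => h hucadj.symm),
          Finset.filter_insert, if_neg (fun h : ¬ G.Adj x v => h hvcadj.symm)]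
      · have hxu : x ≠ u := fun h => hu (h ▸ hx)
        have hxv : x ≠ v := fun h => hv (h ▸ hx)
        have hxuadj : ¬ G.Adj x u := fun h => hxc (huonly x hx h.symm)
        have hxvadj : ¬ G.Adj x v := fun h => hxc (hvonly x hx h.symm)
        have optx : nkOpt G x S = insert u (insert v (nkOpt G x s)) := by
          unfold nkOpt
          rw [Finset.erase_insert_of_ne hxu.symm, Finset.erase_insert_of_ne hxv.symm,
            Finset.filter_insert, if_pos hxuadj, Finset.filter_insert, if_pos hxvadj]
        rw [optx]
        have hsubopt : ∀ y ∈ nkOpt G x s, y ∈ s :=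
          fun y hy => Finset.mem_of_mem_erase (Finset.mem_of_mem_filter _ hy)
        have hunotin : u ∉ nkOpt G x s := fun h => hu (hsubopt u h)
        have hvnotin : v ∉ nkOpt G x s := fun h => hv (hsubopt v h)
        by_cases hxcadj : G.Adj x c
        · -- c is removed; u, v become isolated
          have hcnot : c ∉ nkOpt G x s := by
            unfold nkOpt
            simp [hxcadj]
          exact isolated_pair G u v huv huvadj (nkOpt G x s) hunotin hvnotin
            (fun y hy hadj => hcnot ((huonly y (hsubopt y hy) hadj) ▸ hy))
            (fun y hy hadj => hcnot ((hvonly y (hsubopt y hy) hadj) ▸ hy))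
        · -- c stays, and so does w; use the inductive hypothesis
          have hxw : x ≠ w := fun h => hxcadj (h ▸ hwcadj)
          have hcmem : c ∈ nkOpt G x s := by
            unfold nkOpt
            simp only [Finset.mem_filter, Finset.mem_erase]
            exact ⟨⟨fun h => hxc h.symm, hc⟩, hxcadj⟩
          have hwmem : w ∈ nkOpt G x s := by
            unfold nkOpt
            simp only [Finset.mem_filter, Finset.mem_erase]
            exact ⟨⟨fun h => hxw h.symm, hw⟩, fun h => hxc (hwonly x hx h.symm)⟩
          exact ih (nkOpt G x s) (nkOpt_ssubset G hx) hcmem hwmem hunotin hvnotin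
            (fun y hy hadj => hwonly y (hsubopt y hy) hadj)
            (fun y hy hadj => huonly y (hsubopt y hy) hadj)
            (fun y hy hadj => hvonly y (hsubopt y hy) hadj)
    -- assemble
    rw [nkGrundy_eq G S, nkGrundy_eq G s]
    congr 1
    have hwval : nkGrundy G (nkOpt G w s) ∈ s.image (fun y => nkGrundy G (nkOpt G y s)) :=
      Finset.mem_image.mpr ⟨w, hw, rfl⟩
    rw [hSdef, Finset.image_insert, Finset.image_insert, optu, optv, valu, valv,
      Finset.image_congr (fun x hx => key x hx), Finset.insert_eq_self.mpr,
      Finset.insert_eq_self.mpr hwval]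
    exact Finset.mem_insert_of_mem hwval

lemma nkGrundy_image {W : Type*} [DecidableEq W] (G : SimpleGraph V) (H : SimpleGraph W)
    [DecidableRel G.Adj] [DecidableRel H.Adj] (f : V → W) :
    ∀ s : Finset V, (∀ a ∈ s, ∀ b ∈ s, f a = f b → a = b) →
      (∀ a ∈ s, ∀ b ∈ s, (G.Adj a b ↔ H.Adj (f a) (f b))) →
      nkGrundy H (s.image f) = nkGrundy G s := by
  intro s
  induction s using Finset.strongInduction with
  | _ s ih =>
    intro hinj hadj
    rw [nkGrundy_eq, nkGrundy_eq]
    congr 1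
    rw [Finset.image_image]
    apply Finset.image_congr
    intro x hx
    have hsub : ∀ y ∈ nkOpt G x s, y ∈ s :=
      fun y hy => Finset.mem_of_mem_erase (Finset.mem_of_mem_filter _ hy)
    have hkey : nkOpt H (f x) (s.image f) = (nkOpt G x s).image f := by
      unfold nkOpt
      ext y
      simp only [Finset.mem_filter, Finset.mem_erase, Finset.mem_image]
      constructor
      · rintro ⟨⟨hyne, z, hz, rfl⟩, hnadj⟩
        exact ⟨z, ⟨⟨fun h => hyne (h ▸ rfl), hz⟩,
          fun h => hnadj ((hadj x hx z hz).mp h)⟩, rfl⟩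
      · rintro ⟨z, ⟨⟨hzx, hz⟩, hnadj⟩, rfl⟩
        exact ⟨⟨fun h => hzx (hinj z hz x hx h), z, hz, rfl⟩,
          fun h => hnadj ((hadj x hx z hz).mpr h)⟩
    show nkGrundy H (nkOpt H (f x) (s.image f)) = nkGrundy G (nkOpt G x s)
    rw [hkey]
    exact ih (nkOpt G x s) (nkOpt_ssubset G hx)
      (fun a ha b hb => hinj a (hsub a ha) b (hsub b hb))
      (fun a ha b hb => hadj a (hsub a ha) b (hsub b hb))

set_option maxHeartbeats 2000000 in
/-- For every `k ≥ 1` and `n ≥ 3`, the Node-Kayles Grundy value of the star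
with `n` leaves and a tail of `k` vertices equals that of the star with `n - 2`
leaves and the same tail: `𝒢(T_{n} ⊙_k) = 𝒢(T_{n-2} ⊙_k)`. -/
theorem nkGrundy_starTail_reduce (n k : ℕ) (hk : 1 ≤ k) (hn : 3 ≤ n) :
    nkGrundy (starTail n k) (Finset.range (n + k + 1)) =
      nkGrundy (starTail (n - 2) k) (Finset.range ((n - 2) + k + 1)) := by
  obtain ⟨m, rfl⟩ : ∃ m, n = m + 3 := ⟨n - 3, by omega⟩
  simp only [show m + 3 - 2 = m + 1 from by omega]
  set s0 : Finset ℕ := ((Finset.range (m + 3 + k + 1)).erase (m + 3)).erase (m + 2)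
    with hs0def
  have hs0mem : ∀ x, x ∈ s0 ↔ x ≠ m + 2 ∧ x ≠ m + 3 ∧ x < m + 3 + k + 1 := by
    intro x
    simp only [hs0def, Finset.mem_erase, Finset.mem_range]
  -- Step 1: remove the two extra leaves m+2, m+3 (pendant at the center 0,
  -- which also has the leaf 1).
  have hins : insert (m + 3) (insert (m + 2) s0) = Finset.range (m + 3 + k + 1) := by
    rw [hs0def, Finset.insert_erase, Finset.insert_erase]
    · simp only [Finset.mem_range]; omega
    · simp only [Finset.mem_erase, Finset.mem_range]; omega
  have step1 : nkGrundy (starTail (m + 3) k) (Finset.range (m + 3 + k + 1))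
      = nkGrundy (starTail (m + 3) k) s0 := by
    rw [← hins]
    refine pendant_pair (starTail (m + 3) k) 0 1 (m + 3) (m + 2)
      (by omega) (by omega) ?_ ?_ ?_ ?_ s0 ?_ ?_ ?_ ?_ ?_ ?_ ?_
    · simp only [starTail, SimpleGraph.fromRel_adj, true_and, and_true]; omega
    · simp only [starTail, SimpleGraph.fromRel_adj, true_and, and_true]; omega
    · simp only [starTail, SimpleGraph.fromRel_adj, true_and, and_true]; omega
    · simp only [starTail, SimpleGraph.fromRel_adj, true_and, and_true]; omega
    · rw [hs0mem]; omega
    · rw [hs0mem]; omega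
    · rw [hs0mem]; omega
    · rw [hs0mem]; omega
    · intro x hx h
      rw [hs0mem] at hx
      simp only [starTail, SimpleGraph.fromRel_adj, true_and, and_true] at h
      omega
    · intro x hx h
      rw [hs0mem] at hx
      simp only [starTail, SimpleGraph.fromRel_adj, true_and, and_true] at h
      omega
    · intro x hx h
      rw [hs0mem] at hx
      simp only [starTail, SimpleGraph.fromRel_adj, true_and, and_true] at h
      omega
  -- Step 2: relabel the tail vertices with a shift by 2.
  set f : ℕ → ℕ := fun a => if a ≤ m + 1 then a else a - 2 with hfdef
  have hfle : ∀ a, a ≤ m + 1 → f a = a := by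
    intro a h; simp only [hfdef]; rw [if_pos h]
  have hfgt : ∀ a, ¬ (a ≤ m + 1) → f a = a - 2 := by
    intro a h; simp only [hfdef]; rw [if_neg h]
  have himg : s0.image f = Finset.range (m + 1 + k + 1) := by
    ext y
    simp only [Finset.mem_image, Finset.mem_range]
    constructor
    · rintro ⟨x, hx, rfl⟩
      rw [hs0mem] at hx
      by_cases h : x ≤ m + 1
      · rw [hfle x h]; omega
      · rw [hfgt x h]; omega
    · intro hy
      by_cases h : y ≤ m + 1
      · exact ⟨y, by rw [hs0mem]; omega, hfle y h⟩
      · refine ⟨y + 2, by rw [hs0mem]; omega, ?_⟩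
        rw [hfgt (y + 2) (by omega)]
        omega
  have hinj : ∀ a ∈ s0, ∀ b ∈ s0, f a = f b → a = b := by
    intro a ha b hb hab
    rw [hs0mem] at ha hb
    by_cases h1 : a ≤ m + 1 <;> by_cases h2 : b ≤ m + 1
    · rw [hfle a h1, hfle b h2] at hab; omega
    · rw [hfle a h1, hfgt b h2] at hab; omega
    · rw [hfgt a h1, hfle b h2] at hab; omega
    · rw [hfgt a h1, hfgt b h2] at hab; omega
  have hadjpres : ∀ a ∈ s0, ∀ b ∈ s0,
      ((starTail (m + 3) k).Adj a b ↔ (starTail (m + 1) k).Adj (f a) (f b)) := by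
    intro a ha b hb
    rw [hs0mem] at ha hb
    by_cases h1 : a ≤ m + 1 <;> by_cases h2 : b ≤ m + 1
    · rw [hfle a h1, hfle b h2]
      simp only [starTail, SimpleGraph.fromRel_adj, true_and, and_true]; omega
    · rw [hfle a h1, hfgt b h2]
      simp only [starTail, SimpleGraph.fromRel_adj, true_and, and_true]; omega
    · rw [hfgt a h1, hfle b h2]
      simp only [starTail, SimpleGraph.fromRel_adj, true_and, and_true]; omega
    · rw [hfgt a h1, hfgt b h2]
      simp only [starTail, SimpleGraph.fromRel_adj, true_and, and_true]; omega
  have step2 : nkGrundy (starTail (m + 1) k) (s0.image f)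
      = nkGrundy (starTail (m + 3) k) s0 :=
    nkGrundy_image (starTail (m + 3) k) (starTail (m + 1) k) f s0 hinj hadjpres
  rw [step1, ← step2, himg]
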